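/- arXiv:1903.01622 — 2 statements merged into one kernel-verified Lean document; each statement's English description precedes it below -/
import Mathlib

section
/- Let k ≥ 3 and n ≥ 3k·binomial(2k, k). Let F be a (3, 2k)-conditionally intersecting family of k-element subsets of [n] such that every member F of F contains a (k−1)-element subset that is contained in no other member of F, and let A, B ∈ F be disjoint. Then the number of members F of F with |F ∩ (A ∪ B)| ≤ 1 is at most binomial(n−2k, k−1). -/
/-- A family `F` of finsets is `(d, s)`-conditionally intersecting if there do not exist
`d` distinct members of `F` whose union has size at most `s` and whose intersection is empty. -/
def CondIntersecting {n : ℕ} (d s : ℕ) (F : Finset (Finset (Fin n))) : Prop :=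
  ¬ ∃ D ⊆ F, D.card = d ∧ (D.sup id).card ≤ s ∧ D.inf id = ∅

theorem stmt15 (n k : ℕ) (hk : 3 ≤ k) (hn : 3 * k * (2 * k).choose k ≤ n)
    (F : Finset (Finset (Fin n))) (hunif : ∀ S ∈ F, S.card = k)
    (hci : CondIntersecting 3 (2 * k) F)
    (huniq : ∀ S ∈ F, ∃ G ⊆ S, G.card = k - 1 ∧ ∀ T ∈ F, G ⊆ T → T = S)
    (A B : Finset (Fin n)) (hA : A ∈ F) (hB : B ∈ F) (hAB : Disjoint A B) :
    (F.filter (fun S => (S ∩ (A ∪ B)).card ≤ 1)).card ≤ (n - 2 * k).choose (k - 1) := by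
  classical
  set U := A ∪ B with hUdef
  have hkA := hunif A hA
  have hkB := hunif B hB
  have hUcard : U.card = 2 * k := by
    rw [hUdef, Finset.card_union_of_disjoint hAB, hkA, hkB]; ring
  -- choice function for the unique (k-1)-subsets
  have hgex : ∀ S : Finset (Fin n), ∃ G : Finset (Fin n),
      S ∈ F → G ⊆ S ∧ G.card = k - 1 ∧ ∀ T ∈ F, G ⊆ T → T = S := by
    intro S
    by_cases h : S ∈ F
    · obtain ⟨G, h1, h2, h3⟩ := huniq S h
      exact ⟨G, fun _ => ⟨h1, h2, h3⟩⟩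
    · exact ⟨∅, fun h' => absurd h' h⟩
  choose g hgspec using hgex
  set f : Finset (Fin n) → Finset (Fin n) := fun S => if S ∩ U = ∅ then g S else S \ U with hf
  have hsdcard : ∀ S ∈ F, (S ∩ U).card = 1 → (S \ U).card = k - 1 := by
    intro S hS h1
    have h2 := Finset.card_sdiff_add_card_inter S U
    rw [hunif S hS] at h2
    omega
  -- key uniqueness for card-one intersections
  have key : ∀ S ∈ F, (S ∩ U).card = 1 → ∀ S' ∈ F, (S' ∩ U).card = 1 →
      S \ U = S' \ U → S = S' := by
    intro S hS hS1 S' hS' hS'1 hdiff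
    by_contra hne
    obtain ⟨x, hx⟩ := Finset.card_eq_one.mp hS1
    obtain ⟨x', hx'⟩ := Finset.card_eq_one.mp hS'1
    have hxS : x ∈ S ∩ U := hx ▸ Finset.mem_singleton_self x
    have hx'S : x' ∈ S' ∩ U := hx' ▸ Finset.mem_singleton_self x'
    have hxU : x ∈ U := (Finset.mem_inter.mp hxS).2
    have hxx' : x ≠ x' := by
      intro hxx
      apply hne
      have h1 : S = (S \ U) ∪ (S ∩ U) := (Finset.sdiff_union_inter S U).symm
      have h2 : S' = (S' \ U) ∪ (S' ∩ U) := (Finset.sdiff_union_inter S' U).symm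
      rw [h1, h2, hdiff, hx, hx', hxx]
    have main : ∀ C, C ∈ F → C ⊆ U → x ∈ C → False := by
      intro C hC hCU hxC
      have hCk : C.card = k := hunif C hC
      have hCI : C ∩ U = C := Finset.inter_eq_left.mpr hCU
      have hSC : S ≠ C := by
        intro h; rw [h, hCI, hCk] at hS1; omega
      have hS'C : S' ≠ C := by
        intro h; rw [h, hCI, hCk] at hS'1; omega
      apply hci
      refine ⟨{S, S', C}, ?_, ?_, ?_, ?_⟩
      · intro T hT
        simp only [Finset.mem_insert, Finset.mem_singleton] at hT
        rcases hT with rfl | rfl | rfl <;> assumption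
      · rw [Finset.card_insert_of_notMem, Finset.card_insert_of_notMem,
          Finset.card_singleton]
        · simp [hS'C]
        · simp [hne, hSC]
      · have hsup : ({S, S', C} : Finset (Finset (Fin n))).sup id = S ∪ (S' ∪ C) := by
          simp [Finset.sup_insert]
        rw [hsup]
        have hsub : S ∪ (S' ∪ C) ⊆ (S \ U) ∪ ({x'} ∪ C) := by
          intro y hy
          simp only [Finset.mem_union, Finset.mem_singleton] at hy ⊢
          rcases hy with hy | hy | hy
          · by_cases hyU : y ∈ U
            · have : y ∈ S ∩ U := Finset.mem_inter.mpr ⟨hy, hyU⟩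
              rw [hx] at this
              right; right
              rw [Finset.mem_singleton.mp this]; exact hxC
            · left; exact Finset.mem_sdiff.mpr ⟨hy, hyU⟩
          · by_cases hyU : y ∈ U
            · have : y ∈ S' ∩ U := Finset.mem_inter.mpr ⟨hy, hyU⟩
              rw [hx'] at this
              right; left; exact Finset.mem_singleton.mp this
            · left
              rw [hdiff]
              exact Finset.mem_sdiff.mpr ⟨hy, hyU⟩
          · right; right; exact hy
        calc (S ∪ (S' ∪ C)).card ≤ ((S \ U) ∪ ({x'} ∪ C)).card := Finset.card_le_card hsub
          _ ≤ (S \ U).card + ({x'} ∪ C).card := Finset.card_union_le _ _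
          _ ≤ (S \ U).card + (({x'} : Finset (Fin n)).card + C.card) :=
              Nat.add_le_add_left (Finset.card_union_le _ _) _
          _ ≤ 2 * k := by
              rw [hsdcard S hS hS1, Finset.card_singleton, hCk]; omega
      · have hinf : ({S, S', C} : Finset (Finset (Fin n))).inf id = S ∩ (S' ∩ C) := by
          simp [Finset.inf_insert]
        rw [hinf]
        ext y
        simp only [Finset.mem_inter, Finset.notMem_empty, iff_false]
        rintro ⟨hyS, hyS', hyC⟩
        have hyU : y ∈ U := hCU hyC
        have h1 : y ∈ S ∩ U := Finset.mem_inter.mpr ⟨hyS, hyU⟩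
        have h2 : y ∈ S' ∩ U := Finset.mem_inter.mpr ⟨hyS', hyU⟩
        rw [hx] at h1; rw [hx'] at h2
        exact hxx' ((Finset.mem_singleton.mp h1) ▸ Finset.mem_singleton.mp h2)
    rw [hUdef] at hxU
    rcases Finset.mem_union.mp hxU with hxA | hxB
    · exact main A hA Finset.subset_union_left hxA
    · exact main B hB Finset.subset_union_right hxB
  -- the injection
  have hmaps : ∀ S ∈ F.filter (fun S => (S ∩ U).card ≤ 1),
      f S ∈ Finset.powersetCard (k - 1) (Finset.univ \ U) := by
    intro S hS
    rw [Finset.mem_filter] at hS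
    obtain ⟨hSF, hS1⟩ := hS
    rw [Finset.mem_powersetCard]
    by_cases h : S ∩ U = ∅
    · obtain ⟨hg1, hg2, _⟩ := hgspec S hSF
      simp only [hf, if_pos h]
      refine ⟨?_, hg2⟩
      intro y hy
      have hyS : y ∈ S := hg1 hy
      refine Finset.mem_sdiff.mpr ⟨Finset.mem_univ y, fun hyU => ?_⟩
      have : y ∈ S ∩ U := Finset.mem_inter.mpr ⟨hyS, hyU⟩
      rw [h] at this
      exact Finset.notMem_empty y this
    · have hcard1 : (S ∩ U).card = 1 := by
        have := Finset.card_pos.mpr (Finset.nonempty_iff_ne_empty.mpr h)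
        omega
      simp only [hf, if_neg h]
      exact ⟨Finset.sdiff_subset_sdiff (Finset.subset_univ S) (le_refl U),
        hsdcard S hSF hcard1⟩
  have hinj : ∀ S ∈ F.filter (fun S => (S ∩ U).card ≤ 1),
      ∀ S' ∈ F.filter (fun S => (S ∩ U).card ≤ 1), f S = f S' → S = S' := by
    intro S hS S' hS' hfeq
    rw [Finset.mem_filter] at hS hS'
    obtain ⟨hSF, hS1⟩ := hS
    obtain ⟨hS'F, hS'1⟩ := hS'
    by_cases h : S ∩ U = ∅ <;> by_cases h' : S' ∩ U = ∅
    · simp only [hf, if_pos h, if_pos h'] at hfeq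
      obtain ⟨hg1', _, _⟩ := hgspec S' hS'F
      obtain ⟨_, _, hg3⟩ := hgspec S hSF
      exact (hg3 S' hS'F (hfeq ▸ hg1')).symm
    · simp only [hf, if_pos h, if_neg h'] at hfeq
      obtain ⟨_, _, hg3⟩ := hgspec S hSF
      have : S' = S := hg3 S' hS'F (by rw [hfeq]; exact Finset.sdiff_subset)
      exact absurd (this ▸ h') (by simp [h, this])
    · simp only [hf, if_neg h, if_pos h'] at hfeq
      obtain ⟨_, _, hg3⟩ := hgspec S' hS'F
      have : S = S' := hg3 S hSF (by rw [← hfeq]; exact Finset.sdiff_subset)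
      exact absurd (this ▸ h) (by simp [h', this])
    · simp only [hf, if_neg h, if_neg h'] at hfeq
      have hc : (S ∩ U).card = 1 := by
        have := Finset.card_pos.mpr (Finset.nonempty_iff_ne_empty.mpr h)
        omega
      have hc' : (S' ∩ U).card = 1 := by
        have := Finset.card_pos.mpr (Finset.nonempty_iff_ne_empty.mpr h')
        omega
      exact key S hSF hc S' hS'F hc' hfeq
  calc (F.filter (fun S => (S ∩ U).card ≤ 1)).card
      ≤ (Finset.powersetCard (k - 1) (Finset.univ \ U)).card :=
        Finset.card_le_card_of_injOn f hmaps hinj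
    _ = (n - 2 * k).choose (k - 1) := by
        rw [Finset.card_powersetCard, Finset.card_sdiff_of_subset (Finset.subset_univ U),
          Finset.card_univ, Fintype.card_fin, hUcard]
end

section
/- Let n ≥ 5 and let F be a (3, 6)-conditionally intersecting family of 3-element subsets of [n]. Then |F| ≤ binomial(n−1, 2). -/
namespace Stmt17Aux

open Finset

variable {n : ℕ}

/-- Unfolded form of the (3,6)-condition. -/
def GoodFam (F : Finset (Finset (Fin n))) : Prop :=
  ∀ A ∈ F, ∀ B ∈ F, ∀ C ∈ F, A ≠ B → A ≠ C → B ≠ C →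
    ((A ∪ B) ∪ C).card ≤ 6 → ((A ∩ B) ∩ C) ≠ ∅

/-- The bound function. -/
def BBnd (m : ℕ) : ℕ := if m ≤ 4 then m.choose 3 else (m - 1).choose 2

lemma goodFam_of_ci {F : Finset (Finset (Fin n))} (hci : CondIntersecting 3 6 F) :
    GoodFam F := by
  intro A hA B hB C hC hAB hAC hBC hu hi
  apply hci
  refine ⟨{A, B, C}, ?_, ?_, ?_, ?_⟩
  · intro S hS
    simp only [mem_insert, mem_singleton] at hS
    rcases hS with rfl | rfl | rfl <;> assumption
  · rw [card_insert_of_notMem (by simp [hAB, hAC]), card_insert_of_notMem (by simp [hBC]),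
      card_singleton]
  · have : ({A, B, C} : Finset (Finset (Fin n))).sup id = (A ∪ B) ∪ C := by
      simp only [sup_insert, sup_singleton, id_eq, sup_eq_union]
      exact (union_assoc A B C).symm
    rw [this]; exact hu
  · have : ({A, B, C} : Finset (Finset (Fin n))).inf id = (A ∩ B) ∩ C := by
      simp only [inf_insert, inf_singleton, id_eq, inf_eq_inter]
      exact (inter_assoc A B C).symm
    rw [this]; exact hi

lemma goodFam_mono {F G : Finset (Finset (Fin n))} (hGF : G ⊆ F) (h : GoodFam F) :
    GoodFam G := fun A hA B hB C hC => h A (hGF hA) B (hGF hB) C (hGF hC)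

/-- A 3-set containing three distinct given elements equals the triple. -/
lemma eq_triple {A : Finset (Fin n)} {x y z : Fin n} (hA : A.card = 3)
    (hx : x ∈ A) (hy : y ∈ A) (hz : z ∈ A) (hxy : x ≠ y) (hxz : x ≠ z) (hyz : y ≠ z) :
    A = {x, y, z} := by
  have hsub : ({x, y, z} : Finset (Fin n)) ⊆ A := by
    intro t ht; simp only [mem_insert, mem_singleton] at ht
    rcases ht with rfl | rfl | rfl <;> assumption
  have hcard : ({x, y, z} : Finset (Fin n)).card = 3 := by
    rw [card_insert_of_notMem (by simp [hxy, hxz]), card_insert_of_notMem (by simp [hyz]),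
      card_singleton]
  exact (eq_of_subset_of_card_le hsub (by omega)).symm

/-- A 3-set containing two distinct elements has a third. -/
lemma third_exists {A : Finset (Fin n)} {x y : Fin n} (hA : A.card = 3)
    (hx : x ∈ A) (hy : y ∈ A) (hxy : x ≠ y) :
    ∃ c ∈ A, c ≠ x ∧ c ≠ y ∧ A = {x, y, c} := by
  have h2 : (A \ {x, y}).Nonempty := by
    rw [← card_pos]
    have hxy2 : ({x, y} : Finset (Fin n)).card = 2 := by
      rw [card_insert_of_notMem (by simp [hxy]), card_singleton]
    have hsub : ({x, y} : Finset (Fin n)) ⊆ A := by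
      intro t ht; simp only [mem_insert, mem_singleton] at ht
      rcases ht with rfl | rfl <;> assumption
    have := card_sdiff_of_subset hsub
    omega
  obtain ⟨c, hc⟩ := h2
  rw [mem_sdiff, mem_insert, mem_singleton] at hc
  push_neg at hc
  exact ⟨c, hc.1, hc.2.1, hc.2.2, eq_triple hA hx hy hc.1 hxy (Ne.symm hc.2.1) (Ne.symm hc.2.2)⟩

/-- Key pair rule: two distinct sets sharing a pair exclude other sets avoiding the pair
from meeting them. -/
lemma pairRule {F : Finset (Finset (Fin n))} (hPP : GoodFam F)
    (hunif : ∀ S ∈ F, S.card = 3)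
    {A B C : Finset (Fin n)} (hA : A ∈ F) (hB : B ∈ F) (hC : C ∈ F) (hAB : A ≠ B)
    {x y : Fin n} (hxy : x ≠ y) (hxA : x ∈ A) (hyA : y ∈ A) (hxB : x ∈ B) (hyB : y ∈ B)
    (hxC : x ∉ C) (hyC : y ∉ C) {c : Fin n} (hcA : c ∈ A) (hcC : c ∈ C) : False := by
  have hcx : c ≠ x := fun h => hxC (h ▸ hcC)
  have hcy : c ≠ y := fun h => hyC (h ▸ hcC)
  have hCA : A ≠ C := fun h => hxC (h ▸ hxA)
  have hCB : B ≠ C := fun h => hxC (h ▸ hxB)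
  have hA3 := hunif A hA
  have hB3 := hunif B hB
  have hC3 := hunif C hC
  -- A ∩ B = {x, y}
  have hABsub : ({x, y} : Finset (Fin n)) ⊆ A ∩ B := by
    intro t ht; simp only [mem_insert, mem_singleton] at ht
    rcases ht with rfl | rfl <;> simp [mem_inter, *]
  have hxy2 : ({x, y} : Finset (Fin n)).card = 2 := by
    rw [card_insert_of_notMem (by simp [hxy]), card_singleton]
  have hABcard : (A ∩ B).card ≤ 2 := by
    by_contra h
    push_neg at h
    have h1 : A ∩ B = A := eq_of_subset_of_card_le (inter_subset_left) (by omega)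
    have h2 : A ⊆ B := by rw [← h1]; exact inter_subset_right
    exact hAB (eq_of_subset_of_card_le h2 (by omega))
  have hABeq : A ∩ B = {x, y} := (eq_of_subset_of_card_le hABsub (by omega)).symm
  -- A = {x, y, c}
  have hAeq : A = {x, y, c} := eq_triple hA3 hxA hyA hcA hxy (Ne.symm hcx) (Ne.symm hcy)
  -- union ≤ 6
  have hU : ((A ∪ B) ∪ C).card ≤ 6 := by
    have hsub : (A ∪ B) ∪ C ⊆ B ∪ C := by
      intro t ht
      simp only [mem_union] at ht ⊢
      rcases ht with (htA | htB) | htC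
      · rw [hAeq] at htA
        simp only [mem_insert, mem_singleton] at htA
        rcases htA with rfl | rfl | rfl
        · exact Or.inl hxB
        · exact Or.inl hyB
        · exact Or.inr hcC
      · exact Or.inl htB
      · exact Or.inr htC
    calc ((A ∪ B) ∪ C).card ≤ (B ∪ C).card := card_le_card hsub
      _ ≤ B.card + C.card := card_union_le _ _
      _ ≤ 6 := by omega
  have hI : (A ∩ B) ∩ C = ∅ := by
    rw [hABeq]
    ext t
    simp only [mem_inter, mem_insert, mem_singleton, notMem_empty, iff_false, not_and]
    rintro (rfl | rfl) ht
    · exact hxC ht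
    · exact hyC ht
  exact hPP A hA B hB C hC hAB hCA hCB hU hI

/-- The pair-degree filter has size at most |V| - 2. -/
lemma pair_filter_card {F : Finset (Finset (Fin n))} {V : Finset (Fin n)}
    (hsub : ∀ S ∈ F, S ⊆ V) (hunif : ∀ S ∈ F, S.card = 3) {x y : Fin n} (hxy : x ≠ y) :
    (F.filter (fun A => x ∈ A ∧ y ∈ A)).card ≤ V.card - 2 := by
  classical
  by_cases hne : (F.filter (fun A => x ∈ A ∧ y ∈ A)).Nonempty
  · obtain ⟨A0, hA0⟩ := hne
    rw [mem_filter] at hA0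
    have hxV : x ∈ V := hsub A0 hA0.1 hA0.2.1
    have hyV : y ∈ V := hsub A0 hA0.1 hA0.2.2
    have himg : (F.filter (fun A => x ∈ A ∧ y ∈ A)) ⊆
        ((V.erase x).erase y).image (fun c => ({x, y, c} : Finset (Fin n))) := by
      intro A hA
      rw [mem_filter] at hA
      obtain ⟨c, hcA, hcx, hcy, hAeq⟩ := third_exists (hunif A hA.1) hA.2.1 hA.2.2 hxy
      rw [mem_image]
      refine ⟨c, ?_, hAeq.symm⟩
      rw [mem_erase, mem_erase]
      exact ⟨hcy, hcx, hsub A hA.1 hcA⟩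
    calc (F.filter (fun A => x ∈ A ∧ y ∈ A)).card
        ≤ (((V.erase x).erase y).image (fun c => ({x, y, c} : Finset (Fin n)))).card :=
          card_le_card himg
      _ ≤ ((V.erase x).erase y).card := card_image_le
      _ ≤ V.card - 2 := by
          rw [card_erase_of_mem (by rw [mem_erase]; exact ⟨hxy.symm, hyV⟩),
            card_erase_of_mem hxV]
          omega
    -- done
  · rw [not_nonempty_iff_eq_empty] at hne
    rw [hne]
    simp


lemma choose_two_succ (j : ℕ) : (j + 1).choose 2 = j.choose 2 + j := by
  rw [Nat.choose_succ_succ j 1, Nat.choose_one_right, Nat.add_comm]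

lemma arith1' (k : ℕ) : (k + 5).choose 2 ≤ 3 * (k + 4).choose 2 := by
  induction k with
  | zero => decide
  | succ k ihk =>
    have e1 : k + 1 + 5 = (k + 5) + 1 := by omega
    have e2 : k + 1 + 4 = (k + 4) + 1 := by omega
    have h1 : ((k + 5) + 1).choose 2 = (k + 5).choose 2 + (k + 5) := choose_two_succ _
    have h2 : ((k + 4) + 1).choose 2 = (k + 4).choose 2 + (k + 4) := choose_two_succ _
    rw [e1, e2, h1, h2]
    have h3 : (k + 5).choose 2 = (k + 4).choose 2 + (k + 4) := choose_two_succ (k + 4)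
    omega

lemma arith1 {m : ℕ} (hm : 5 ≤ m) : m.choose 2 ≤ 3 * (m - 1).choose 2 := by
  obtain ⟨k, rfl⟩ : ∃ k, m = k + 5 := ⟨m - 5, by omega⟩
  have e : k + 5 - 1 = k + 4 := by omega
  rw [e]
  exact arith1' k

lemma arith2' (k : ℕ) : 1 + 3 * (k + 6) + (k + 4).choose 2 ≤ (k + 8).choose 2 := by
  induction k with
  | zero => decide
  | succ k ihk =>
    have e1 : k + 1 + 4 = (k + 4) + 1 := by omega
    have e2 : k + 1 + 8 = (k + 8) + 1 := by omega
    have h1 : ((k + 4) + 1).choose 2 = (k + 4).choose 2 + (k + 4) := choose_two_succ _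
    have h2 : ((k + 8) + 1).choose 2 = (k + 8).choose 2 + (k + 8) := choose_two_succ _
    rw [e1, e2, h1, h2]
    omega

lemma arith2 {m : ℕ} (hm : 6 ≤ m) : 1 + 3 * (m - 3) + BBnd (m - 4) ≤ (m - 1).choose 2 := by
  by_cases h8 : m ≤ 8
  · interval_cases m <;> decide
  · have hBB4 : BBnd (m - 4) = (m - 5).choose 2 := by
      rw [BBnd, if_neg (by omega : ¬ (m - 4 ≤ 4)), show m - 4 - 1 = m - 5 from by omega]
    obtain ⟨k, rfl⟩ : ∃ k, m = k + 9 := ⟨m - 9, by omega⟩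
    rw [hBB4, show k + 9 - 5 = k + 4 from by omega, show k + 9 - 3 = k + 6 from by omega,
      show k + 9 - 1 = k + 8 from by omega]
    exact arith2' k

lemma two_le_card {s : Finset (Fin n)} {a b : Fin n} (ha : a ∈ s) (hb : b ∈ s) (hab : a ≠ b) :
    2 ≤ s.card := Finset.one_lt_card_iff.mpr ⟨a, b, ha, hb, hab⟩

/-- Bound on sets containing x but not y, inside ground V. -/
lemma filter_mem_notmem_card {F : Finset (Finset (Fin n))} {V : Finset (Fin n)}
    (hsub : ∀ S ∈ F, S ⊆ V) (hunif : ∀ S ∈ F, S.card = 3) {x y : Fin n} :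
    (F.filter (fun A => x ∈ A ∧ y ∉ A)).card ≤ ((V.erase x).erase y).card.choose 2 := by
  classical
  have himg : (F.filter (fun A => x ∈ A ∧ y ∉ A)) ⊆
      (((V.erase x).erase y).powersetCard 2).image (fun e => insert x e) := by
    intro A hA
    rw [mem_filter] at hA
    obtain ⟨hAF, hxA, hyA⟩ := hA
    rw [mem_image]
    refine ⟨A.erase x, ?_, insert_erase hxA⟩
    rw [mem_powersetCard]
    constructor
    · intro t ht
      rw [mem_erase] at ht
      rw [mem_erase, mem_erase]
      exact ⟨fun h => hyA (h ▸ ht.2), ht.1, hsub A hAF ht.2⟩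
    · rw [card_erase_of_mem hxA, hunif A hAF]
  calc (F.filter (fun A => x ∈ A ∧ y ∉ A)).card
      ≤ ((((V.erase x).erase y).powersetCard 2).image (fun e => insert x e)).card :=
        card_le_card himg
    _ ≤ (((V.erase x).erase y).powersetCard 2).card := card_image_le
    _ = ((V.erase x).erase y).card.choose 2 := card_powersetCard 2 _

lemma key (n : ℕ) : ∀ fuel : ℕ, ∀ (V : Finset (Fin n)) (F : Finset (Finset (Fin n))),
    V.card ≤ fuel → (∀ S ∈ F, S ⊆ V) → (∀ S ∈ F, S.card = 3) → GoodFam F →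
    F.card ≤ BBnd V.card := by
  intro fuel
  induction fuel with
  | zero =>
    intro V F hfuel hsub hunif _
    have hV : V = ∅ := card_eq_zero.mp (Nat.le_zero.mp hfuel)
    have hF : F = ∅ := by
      rw [eq_empty_iff_forall_notMem]
      intro S hS
      have h1 := hsub S hS
      have h2 := hunif S hS
      rw [hV, subset_empty] at h1
      rw [h1] at h2
      simp at h2
    rw [hF, hV]
    simp [BBnd]
  | succ fuel ih =>
    intro V F hfuel hsub hunif hPP
    by_cases hm4 : V.card ≤ 4
    · have hFsub : F ⊆ V.powersetCard 3 := by
        intro S hS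
        rw [mem_powersetCard]
        exact ⟨hsub S hS, hunif S hS⟩
      calc F.card ≤ (V.powersetCard 3).card := card_le_card hFsub
        _ = V.card.choose 3 := card_powersetCard 3 V
        _ = BBnd V.card := by rw [BBnd, if_pos hm4]
    · push_neg at hm4
      have hm5 : 5 ≤ V.card := hm4
      have hBB : BBnd V.card = (V.card - 1).choose 2 := by rw [BBnd, if_neg (by omega)]
      by_cases hd : ∀ x y : Fin n, x ≠ y → ((F.filter (fun A => x ∈ A ∧ y ∈ A)).card ≤ 1)
      · -- counting case: all pair degrees ≤ 1
        have hsum : ∑ p ∈ V.powersetCard 2, (F.filter (fun A => p ⊆ A)).card = 3 * F.card := by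
          calc ∑ p ∈ V.powersetCard 2, (F.filter (fun A => p ⊆ A)).card
              = ∑ p ∈ V.powersetCard 2, ∑ A ∈ F, (if p ⊆ A then 1 else 0) := by
                refine Finset.sum_congr rfl fun p _ => ?_
                rw [card_filter]
            _ = ∑ A ∈ F, ∑ p ∈ V.powersetCard 2, (if p ⊆ A then 1 else 0) := Finset.sum_comm
            _ = ∑ A ∈ F, ((V.powersetCard 2).filter (fun p => p ⊆ A)).card := by
                refine Finset.sum_congr rfl fun A _ => ?_
                rw [card_filter]
            _ = ∑ A ∈ F, 3 := by
                refine Finset.sum_congr rfl fun A hA => ?_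
                have hfe : (V.powersetCard 2).filter (fun p => p ⊆ A) = A.powersetCard 2 := by
                  ext q
                  simp only [mem_filter, mem_powersetCard]
                  constructor
                  · rintro ⟨⟨-, hq2⟩, hqA⟩
                    exact ⟨hqA, hq2⟩
                  · rintro ⟨hqA, hq2⟩
                    exact ⟨⟨hqA.trans (hsub A hA), hq2⟩, hqA⟩
                rw [hfe, card_powersetCard, hunif A hA]
                decide
            _ = 3 * F.card := by rw [Finset.sum_const, smul_eq_mul, mul_comm]
        have hle : ∑ p ∈ V.powersetCard 2, (F.filter (fun A => p ⊆ A)).card ≤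
            (V.powersetCard 2).card := by
          have hone : ∀ p ∈ V.powersetCard 2, (F.filter (fun A => p ⊆ A)).card ≤ 1 := by
            intro p hp
            rw [mem_powersetCard] at hp
            obtain ⟨a, b, hab, rfl⟩ := card_eq_two.mp hp.2
            have hfe : F.filter (fun A => ({a, b} : Finset (Fin n)) ⊆ A) =
                F.filter (fun A => a ∈ A ∧ b ∈ A) := by
              refine filter_congr fun A _ => ?_
              simp [insert_subset_iff]
            rw [hfe]
            exact hd a b hab
          calc ∑ p ∈ V.powersetCard 2, (F.filter (fun A => p ⊆ A)).card
              ≤ ∑ _p ∈ V.powersetCard 2, 1 := Finset.sum_le_sum hone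
            _ = (V.powersetCard 2).card := by rw [Finset.sum_const, smul_eq_mul, mul_one]
        rw [hsum, card_powersetCard] at hle
        have harith := arith1 hm5
        rw [hBB]
        omega
      · push_neg at hd
        obtain ⟨x, y, hxy, hcard2⟩ := hd
        rw [Finset.one_lt_card] at hcard2
        obtain ⟨A1, hA1f, A2, hA2f, hA12⟩ := hcard2
        rw [mem_filter] at hA1f hA2f
        obtain ⟨hA1F, hxA1, hyA1⟩ := hA1f
        obtain ⟨hA2F, hxA2, hyA2⟩ := hA2f
        obtain ⟨c, hcA1, hcx, hcy, hA1eq⟩ := third_exists (hunif A1 hA1F) hxA1 hyA1 hxy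
        obtain ⟨c2, hc2A2, hc2x, hc2y, hA2eq⟩ := third_exists (hunif A2 hA2F) hxA2 hyA2 hxy
        have hcc2 : c ≠ c2 := by
          rintro rfl
          exact hA12 (hA1eq.trans hA2eq.symm)
        have hxV : x ∈ V := hsub A1 hA1F hxA1
        have hyV : y ∈ V := hsub A1 hA1F hyA1
        have hcV : c ∈ V := hsub A1 hA1F hcA1
        have hc2V : c2 ∈ V := hsub A2 hA2F hc2A2
        by_cases h5 : V.card = 5
        · -- ground set of size 5
          rw [hBB, h5]
          show F.card ≤ 6
          have hc3 : ((V.erase x).erase y).card = 3 := by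
            rw [card_erase_of_mem (mem_erase.mpr ⟨hxy.symm, hyV⟩), card_erase_of_mem hxV]
            omega
          have hmeets : ∀ C ∈ F, x ∈ C ∨ y ∈ C := by
            intro C hCF
            by_contra hcon
            push_neg at hcon
            obtain ⟨hxC, hyC⟩ := hcon
            have hCsub : C ⊆ (V.erase x).erase y := by
              intro t ht
              exact mem_erase.mpr ⟨fun h => hyC (h ▸ ht),
                mem_erase.mpr ⟨fun h => hxC (h ▸ ht), hsub C hCF ht⟩⟩
            have hCeq : C = (V.erase x).erase y :=
              eq_of_subset_of_card_le hCsub (by rw [hc3, hunif C hCF])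
            have hcC : c ∈ C := by
              rw [hCeq]
              exact mem_erase.mpr ⟨hcy, mem_erase.mpr ⟨hcx, hcV⟩⟩
            exact pairRule hPP hunif hA1F hA2F hCF hA12 hxy hxA1 hyA1 hxA2 hyA2 hxC hyC hcA1 hcC
          have hs1 := card_filter_add_card_filter_not (s := F) (fun A => x ∈ A)
          have hs2 := card_filter_add_card_filter_not
            (s := F.filter (fun A => x ∈ A)) (fun A => y ∈ A)
          have hxyfilter : (F.filter (fun A => x ∈ A)).filter (fun A => y ∈ A) =
              F.filter (fun A => x ∈ A ∧ y ∈ A) := filter_filter _ _ _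
          rw [hxyfilter] at hs2
          have hbxy : (F.filter (fun A => x ∈ A ∧ y ∈ A)).card ≤ 3 := by
            have := pair_filter_card hsub hunif hxy
            omega
          have hchoose32 : Nat.choose 3 2 = 3 := by decide
          have hbx : ((F.filter (fun A => x ∈ A)).filter (fun A => ¬ y ∈ A)).card ≤ 3 := by
            have he : (F.filter (fun A => x ∈ A)).filter (fun A => ¬ y ∈ A) =
                F.filter (fun A => x ∈ A ∧ y ∉ A) := filter_filter _ _ _
            rw [he]
            have := filter_mem_notmem_card (x := x) (y := y) hsub hunif
            rw [hc3, hchoose32] at this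
            exact this
          have hby : (F.filter (fun A => ¬ x ∈ A)).card ≤ 3 := by
            have hss : F.filter (fun A => ¬ x ∈ A) ⊆ F.filter (fun A => y ∈ A ∧ x ∉ A) := by
              intro C hC
              rw [mem_filter] at hC ⊢
              exact ⟨hC.1, (hmeets C hC.1).resolve_left hC.2, hC.2⟩
            have h1 := card_le_card hss
            have h2 := filter_mem_notmem_card (x := y) (y := x) hsub hunif
            have hc3' : ((V.erase y).erase x).card = 3 := by
              rw [card_erase_of_mem (mem_erase.mpr ⟨hxy, hxV⟩), card_erase_of_mem hyV]
              omega
            rw [hc3', hchoose32] at h2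
            omega
          by_cases hFx : ((F.filter (fun A => x ∈ A)).filter (fun A => ¬ y ∈ A)).Nonempty
          · by_cases hFy : (F.filter (fun A => ¬ x ∈ A)).Nonempty
            · -- both nonempty: each has ≤ 1 element
              obtain ⟨C', hC'⟩ := hFy
              rw [mem_filter] at hC'
              obtain ⟨hC'F, hxC'⟩ := hC'
              have hyC' : y ∈ C' := (hmeets C' hC'F).resolve_left hxC'
              obtain ⟨C0, hC0⟩ := hFx
              rw [mem_filter, mem_filter] at hC0
              obtain ⟨⟨hC0F, hxC0⟩, hyC0⟩ := hC0
              have hkey : ∀ C ∈ F, x ∈ C → y ∉ C → c ∈ C ∧ c2 ∈ C := by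
                intro C hCF hxC hyC
                have hCne : C ≠ C' := fun h => hxC' (h ▸ hxC)
                have hCA1 : C ≠ A1 := fun h => hyC (h ▸ hyA1)
                have hC'A1 : C' ≠ A1 := fun h => hxC' (h ▸ hxA1)
                have hCA2 : C ≠ A2 := fun h => hyC (h ▸ hyA2)
                have hC'A2 : C' ≠ A2 := fun h => hxC' (h ▸ hxA2)
                have hU1 : ((C ∪ C') ∪ A1).card ≤ 6 := by
                  have hsubV : (C ∪ C') ∪ A1 ⊆ V :=
                    union_subset (union_subset (hsub C hCF) (hsub C' hC'F)) (hsub A1 hA1F)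
                  have := card_le_card hsubV
                  omega
                have h1 := hPP C hCF C' hC'F A1 hA1F hCne hCA1 hC'A1 hU1
                obtain ⟨t, ht⟩ := nonempty_iff_ne_empty.mpr h1
                rw [mem_inter, mem_inter] at ht
                obtain ⟨⟨htC, htC'⟩, htA1⟩ := ht
                rw [hA1eq] at htA1
                simp only [mem_insert, mem_singleton] at htA1
                have hcC : c ∈ C := by
                  rcases htA1 with rfl | rfl | rfl
                  · exact absurd htC' hxC'
                  · exact absurd htC hyC
                  · exact htC
                have hU2 : ((C ∪ C') ∪ A2).card ≤ 6 := by
                  have hsubV : (C ∪ C') ∪ A2 ⊆ V :=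
                    union_subset (union_subset (hsub C hCF) (hsub C' hC'F)) (hsub A2 hA2F)
                  have := card_le_card hsubV
                  omega
                have h2 := hPP C hCF C' hC'F A2 hA2F hCne hCA2 hC'A2 hU2
                obtain ⟨t2, ht2⟩ := nonempty_iff_ne_empty.mpr h2
                rw [mem_inter, mem_inter] at ht2
                obtain ⟨⟨ht2C, ht2C'⟩, ht2A2⟩ := ht2
                rw [hA2eq] at ht2A2
                simp only [mem_insert, mem_singleton] at ht2A2
                have hc2C : c2 ∈ C := by
                  rcases ht2A2 with rfl | rfl | rfl
                  · exact absurd ht2C' hxC'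
                  · exact absurd ht2C hyC
                  · exact ht2C
                exact ⟨hcC, hc2C⟩
              have hFxone : ((F.filter (fun A => x ∈ A)).filter (fun A => ¬ y ∈ A)).card ≤ 1 := by
                apply card_le_one.mpr
                intro a ha b hb
                rw [mem_filter, mem_filter] at ha hb
                obtain ⟨⟨haF, hxa⟩, hya⟩ := ha
                obtain ⟨⟨hbF, hxb⟩, hyb⟩ := hb
                obtain ⟨hca, hc2a⟩ := hkey a haF hxa hya
                obtain ⟨hcb, hc2b⟩ := hkey b hbF hxb hyb
                rw [eq_triple (hunif a haF) hxa hca hc2a (Ne.symm hcx) (Ne.symm hc2x) hcc2,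
                  eq_triple (hunif b hbF) hxb hcb hc2b (Ne.symm hcx) (Ne.symm hc2x) hcc2]
              have hkey' : ∀ D ∈ F, x ∉ D → c ∈ D ∧ c2 ∈ D := by
                intro D hDF hxD
                have hne : C0 ≠ D := fun h => hxD (h ▸ hxC0)
                have hC0A1 : C0 ≠ A1 := fun h => hyC0 (h ▸ hyA1)
                have hDA1 : D ≠ A1 := fun h => hxD (h ▸ hxA1)
                have hC0A2 : C0 ≠ A2 := fun h => hyC0 (h ▸ hyA2)
                have hDA2 : D ≠ A2 := fun h => hxD (h ▸ hxA2)
                have hU1 : ((C0 ∪ D) ∪ A1).card ≤ 6 := by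
                  have hsubV : (C0 ∪ D) ∪ A1 ⊆ V :=
                    union_subset (union_subset (hsub C0 hC0F) (hsub D hDF)) (hsub A1 hA1F)
                  have := card_le_card hsubV
                  omega
                have h1 := hPP C0 hC0F D hDF A1 hA1F hne hC0A1 hDA1 hU1
                obtain ⟨t, ht⟩ := nonempty_iff_ne_empty.mpr h1
                rw [mem_inter, mem_inter] at ht
                obtain ⟨⟨htC0, htD⟩, htA1⟩ := ht
                rw [hA1eq] at htA1
                simp only [mem_insert, mem_singleton] at htA1
                have hcD : c ∈ D := by
                  rcases htA1 with rfl | rfl | rfl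
                  · exact absurd htD hxD
                  · exact absurd htC0 hyC0
                  · exact htD
                have hU2 : ((C0 ∪ D) ∪ A2).card ≤ 6 := by
                  have hsubV : (C0 ∪ D) ∪ A2 ⊆ V :=
                    union_subset (union_subset (hsub C0 hC0F) (hsub D hDF)) (hsub A2 hA2F)
                  have := card_le_card hsubV
                  omega
                have h2 := hPP C0 hC0F D hDF A2 hA2F hne hC0A2 hDA2 hU2
                obtain ⟨t2, ht2⟩ := nonempty_iff_ne_empty.mpr h2
                rw [mem_inter, mem_inter] at ht2
                obtain ⟨⟨ht2C0, ht2D⟩, ht2A2⟩ := ht2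
                rw [hA2eq] at ht2A2
                simp only [mem_insert, mem_singleton] at ht2A2
                have hc2D : c2 ∈ D := by
                  rcases ht2A2 with rfl | rfl | rfl
                  · exact absurd ht2D hxD
                  · exact absurd ht2C0 hyC0
                  · exact ht2D
                exact ⟨hcD, hc2D⟩
              have hFyone : (F.filter (fun A => ¬ x ∈ A)).card ≤ 1 := by
                apply card_le_one.mpr
                intro a ha b hb
                rw [mem_filter] at ha hb
                obtain ⟨haF, hxa⟩ := ha
                obtain ⟨hbF, hxb⟩ := hb
                have hya : y ∈ a := (hmeets a haF).resolve_left hxa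
                have hyb : y ∈ b := (hmeets b hbF).resolve_left hxb
                obtain ⟨hca, hc2a⟩ := hkey' a haF hxa
                obtain ⟨hcb, hc2b⟩ := hkey' b hbF hxb
                rw [eq_triple (hunif a haF) hya hca hc2a (Ne.symm hcy) (Ne.symm hc2y) hcc2,
                  eq_triple (hunif b hbF) hyb hcb hc2b (Ne.symm hcy) (Ne.symm hc2y) hcc2]
              omega
            · have h0 : (F.filter (fun A => ¬ x ∈ A)).card = 0 := by
                rw [card_eq_zero]
                exact not_nonempty_iff_eq_empty.mp hFy
              omega
          · have h0 : ((F.filter (fun A => x ∈ A)).filter (fun A => ¬ y ∈ A)).card = 0 := by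
              rw [card_eq_zero]
              exact not_nonempty_iff_eq_empty.mp hFx
            omega
        · -- ground set of size ≥ 6
          have hm6 : 6 ≤ V.card := by omega
          have deleteStep : ∀ z : Fin n, z ∈ V →
              (F.filter (fun A => z ∈ A)).card ≤ V.card - 2 → F.card ≤ BBnd V.card := by
            intro z hzV hbound
            have hsplit := card_filter_add_card_filter_not (s := F) (fun A => z ∈ A)
            have hF'sub : ∀ S ∈ F.filter (fun A => ¬ z ∈ A), S ⊆ V.erase z := by
              intro S hS
              rw [mem_filter] at hS
              intro t ht
              rw [mem_erase]
              exact ⟨fun h => hS.2 (h ▸ ht), hsub S hS.1 ht⟩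
            have hcard' : (V.erase z).card = V.card - 1 := card_erase_of_mem hzV
            have hIH := ih (V.erase z) (F.filter (fun A => ¬ z ∈ A)) (by omega) hF'sub
              (fun S hS => hunif S (filter_subset _ _ hS)) (goodFam_mono (filter_subset _ _) hPP)
            rw [hcard'] at hIH
            have hBB' : BBnd (V.card - 1) = (V.card - 2).choose 2 := by
              rw [BBnd, if_neg (by omega), show V.card - 1 - 1 = V.card - 2 from by omega]
            rw [hBB'] at hIH
            have harith : (V.card - 1).choose 2 = (V.card - 2).choose 2 + (V.card - 2) := by
              rw [show V.card - 1 = (V.card - 2) + 1 from by omega]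
              exact choose_two_succ _
            rw [hBB]
            omega
          by_cases hxc : ∃ E ∈ F, E ≠ A1 ∧ x ∈ E ∧ c ∈ E
          · by_cases hyc : ∃ E ∈ F, E ≠ A1 ∧ y ∈ E ∧ c ∈ E
            · -- 2a: both heavy, triangle count
              obtain ⟨E1, hE1F, hE1ne, hxE1, hcE1⟩ := hxc
              obtain ⟨E2, hE2F, hE2ne, hyE2, hcE2⟩ := hyc
              set T : Finset (Fin n) := {x, y, c} with hTdef
              have hxT : x ∈ T := by simp [hTdef]
              have hyT : y ∈ T := by simp [hTdef]
              have hcT : c ∈ T := by simp [hTdef]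
              have hTcard : T.card = 3 := by
                rw [hTdef, card_insert_of_notMem (by simp [hxy, Ne.symm hcx]),
                  card_insert_of_notMem (by simp [Ne.symm hcy]), card_singleton]
              have hTV : T ⊆ V := by
                rw [hTdef]
                intro t ht
                simp only [mem_insert, mem_singleton] at ht
                rcases ht with rfl | rfl | rfl <;> assumption
              have hclass : ∀ C ∈ F, ¬ (2 ≤ (C ∩ T).card) →
                  (x ∉ C ∧ y ∉ C ∧ c ∉ C ∧ c2 ∉ C) := by
                intro C hCF hlt
                have hxC : x ∉ C := by
                  intro hxC
                  by_cases hyC : y ∈ C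
                  · exact hlt (two_le_card (mem_inter.mpr ⟨hxC, hxT⟩)
                      (mem_inter.mpr ⟨hyC, hyT⟩) hxy)
                  · by_cases hcC : c ∈ C
                    · exact hlt (two_le_card (mem_inter.mpr ⟨hxC, hxT⟩)
                        (mem_inter.mpr ⟨hcC, hcT⟩) (Ne.symm hcx))
                    · exact pairRule hPP hunif hA1F hE2F hCF (Ne.symm hE2ne) (Ne.symm hcy)
                        hyA1 hcA1 hyE2 hcE2 hyC hcC hxA1 hxC
                have hyC : y ∉ C := by
                  intro hyC
                  by_cases hcC : c ∈ C
                  · exact hlt (two_le_card (mem_inter.mpr ⟨hyC, hyT⟩)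
                      (mem_inter.mpr ⟨hcC, hcT⟩) (Ne.symm hcy))
                  · exact pairRule hPP hunif hA1F hE1F hCF (Ne.symm hE1ne) (Ne.symm hcx)
                      hxA1 hcA1 hxE1 hcE1 hxC hcC hyA1 hyC
                have hcC : c ∉ C := fun hcC =>
                  pairRule hPP hunif hA1F hA2F hCF hA12 hxy hxA1 hyA1 hxA2 hyA2 hxC hyC hcA1 hcC
                have hc2C : c2 ∉ C := fun hc2C =>
                  pairRule hPP hunif hA2F hA1F hCF (Ne.symm hA12) hxy hxA2 hyA2 hxA1 hyA1
                    hxC hyC hc2A2 hc2C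
                exact ⟨hxC, hyC, hcC, hc2C⟩
              have hsplit := card_filter_add_card_filter_not (s := F)
                (fun C => 2 ≤ (C ∩ T).card)
              have hsplitG := card_filter_add_card_filter_not
                (s := F.filter (fun C => 2 ≤ (C ∩ T).card)) (fun C => T ⊆ C)
              have hG1 : ((F.filter (fun C => 2 ≤ (C ∩ T).card)).filter (fun C => T ⊆ C)).card
                  ≤ 1 := by
                have hss : (F.filter (fun C => 2 ≤ (C ∩ T).card)).filter (fun C => T ⊆ C)
                    ⊆ {T} := by
                  intro C hC
                  rw [mem_filter, mem_filter] at hC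
                  rw [mem_singleton]
                  exact (eq_of_subset_of_card_le hC.2
                    (le_of_eq ((hunif C hC.1.1).trans hTcard.symm))).symm
                have := card_le_card hss
                rwa [card_singleton] at this
              have hG2 : ((F.filter (fun C => 2 ≤ (C ∩ T).card)).filter
                  (fun C => ¬ T ⊆ C)).card ≤ 3 * (V.card - 3) := by
                calc ((F.filter (fun C => 2 ≤ (C ∩ T).card)).filter (fun C => ¬ T ⊆ C)).card
                    ≤ ((T.powersetCard 2) ×ˢ ((V \ T).powersetCard 1)).card := by
                      apply card_le_card_of_injOn (fun C => (C ∩ T, C \ T))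
                      · intro C hC
                        simp only [mem_coe] at hC ⊢
                        rw [mem_filter, mem_filter] at hC
                        obtain ⟨⟨hCF, h2⟩, hnTC⟩ := hC
                        have hC3 := hunif C hCF
                        have hsd := card_inter_add_card_sdiff C T
                        have h2' : (C ∩ T).card = 2 := by
                          rcases Nat.lt_or_ge (C ∩ T).card 3 with h | h
                          · omega
                          · exfalso
                            have he : C ∩ T = T :=
                              eq_of_subset_of_card_le inter_subset_right (by omega)
                            exact hnTC (by rw [← he]; exact inter_subset_left)
                        apply mem_product.mpr
                        constructor
                        · show C ∩ T ∈ T.powersetCard 2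
                          rw [mem_powersetCard]
                          exact ⟨inter_subset_right, h2'⟩
                        · show C \ T ∈ (V \ T).powersetCard 1
                          rw [mem_powersetCard]
                          constructor
                          · intro t ht
                            rw [mem_sdiff] at ht ⊢
                            exact ⟨hsub C hCF ht.1, ht.2⟩
                          · omega
                      · intro C1 h1 C2 h2 h
                        rw [Prod.mk.injEq] at h
                        have e1 := sdiff_union_inter C1 T
                        have e2 := sdiff_union_inter C2 T
                        rw [← e1, ← e2, h.1, h.2]
                  _ = 3 * (V.card - 3) := by
                      rw [card_product, card_powersetCard, card_powersetCard, hTcard,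
                        card_sdiff_of_subset hTV, hTcard, Nat.choose_one_right]
                      norm_num
              have hyV' : y ∈ V.erase x := mem_erase.mpr ⟨hxy.symm, hyV⟩
              have hcV' : c ∈ (V.erase x).erase y := mem_erase.mpr ⟨hcy, mem_erase.mpr ⟨hcx, hcV⟩⟩
              have hc2V' : c2 ∈ ((V.erase x).erase y).erase c :=
                mem_erase.mpr ⟨Ne.symm hcc2, mem_erase.mpr ⟨hc2y, mem_erase.mpr ⟨hc2x, hc2V⟩⟩⟩
              have hRcard : ((((V.erase x).erase y).erase c).erase c2).card = V.card - 4 := by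
                rw [card_erase_of_mem hc2V', card_erase_of_mem hcV', card_erase_of_mem hyV',
                  card_erase_of_mem hxV]
                omega
              have hrest_sub : ∀ S ∈ F.filter (fun C => ¬ 2 ≤ (C ∩ T).card),
                  S ⊆ (((V.erase x).erase y).erase c).erase c2 := by
                intro S hS
                rw [mem_filter] at hS
                obtain ⟨h1, h2, h3, h4⟩ := hclass S hS.1 hS.2
                intro t ht
                rw [mem_erase, mem_erase, mem_erase, mem_erase]
                exact ⟨fun h => h4 (h ▸ ht), fun h => h3 (h ▸ ht), fun h => h2 (h ▸ ht),
                  fun h => h1 (h ▸ ht), hsub S hS.1 ht⟩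
              have hIH := ih ((((V.erase x).erase y).erase c).erase c2)
                (F.filter (fun C => ¬ 2 ≤ (C ∩ T).card)) (by omega) hrest_sub
                (fun S hS => hunif S (filter_subset _ _ hS)) (goodFam_mono (filter_subset _ _) hPP)
              rw [hRcard] at hIH
              have harith := arith2 hm6
              rw [hBB]
              omega
            · -- 2b: delete y
              obtain ⟨E1, hE1F, hE1ne, hxE1, hcE1⟩ := hxc
              have hyx : ∀ C ∈ F, y ∈ C → x ∈ C := by
                intro C hCF hyC
                by_contra hxC
                by_cases hcC : c ∈ C
                · exact hyc ⟨C, hCF, fun h => hxC (h ▸ hxA1), hyC, hcC⟩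
                · exact pairRule hPP hunif hA1F hE1F hCF (Ne.symm hE1ne) (Ne.symm hcx)
                    hxA1 hcA1 hxE1 hcE1 hxC hcC hyA1 hyC
              have hb : (F.filter (fun A => y ∈ A)).card ≤ V.card - 2 := by
                have hss : F.filter (fun A => y ∈ A) ⊆ F.filter (fun A => x ∈ A ∧ y ∈ A) := by
                  intro C hC
                  rw [mem_filter] at hC ⊢
                  exact ⟨hC.1, hyx C hC.1 hC.2, hC.2⟩
                exact le_trans (card_le_card hss) (pair_filter_card hsub hunif hxy)
              exact deleteStep y hyV hb
          · by_cases hyc : ∃ E ∈ F, E ≠ A1 ∧ y ∈ E ∧ c ∈ E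
            · -- 2c: delete x
              obtain ⟨E2, hE2F, hE2ne, hyE2, hcE2⟩ := hyc
              have hxy' : ∀ C ∈ F, x ∈ C → y ∈ C := by
                intro C hCF hxC
                by_contra hyC
                by_cases hcC : c ∈ C
                · exact hxc ⟨C, hCF, fun h => hyC (h ▸ hyA1), hxC, hcC⟩
                · exact pairRule hPP hunif hA1F hE2F hCF (Ne.symm hE2ne) (Ne.symm hcy)
                    hyA1 hcA1 hyE2 hcE2 hyC hcC hxA1 hxC
              have hb : (F.filter (fun A => x ∈ A)).card ≤ V.card - 2 := by
                have hss : F.filter (fun A => x ∈ A) ⊆ F.filter (fun A => x ∈ A ∧ y ∈ A) := by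
                  intro C hC
                  rw [mem_filter] at hC ⊢
                  exact ⟨hC.1, hC.2, hxy' C hC.1 hC.2⟩
                exact le_trans (card_le_card hss) (pair_filter_card hsub hunif hxy)
              exact deleteStep x hxV hb
            · -- 2d: delete c
              have hb : (F.filter (fun A => c ∈ A)).card ≤ V.card - 2 := by
                have hss : F.filter (fun A => c ∈ A) ⊆ {A1} := by
                  intro C hC
                  rw [mem_filter] at hC
                  obtain ⟨hCF, hcC⟩ := hC
                  rw [mem_singleton]
                  by_contra hne
                  by_cases hxC : x ∈ C
                  · exact hxc ⟨C, hCF, hne, hxC, hcC⟩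
                  · by_cases hyC : y ∈ C
                    · exact hyc ⟨C, hCF, hne, hyC, hcC⟩
                    · exact pairRule hPP hunif hA1F hA2F hCF hA12 hxy hxA1 hyA1 hxA2 hyA2
                        hxC hyC hcA1 hcC
                have := card_le_card hss
                rw [card_singleton] at this
                omega
              exact deleteStep c hcV hb

end Stmt17Aux


theorem stmt17 (n : ℕ) (hn : 5 ≤ n)
    (F : Finset (Finset (Fin n))) (hunif : ∀ S ∈ F, S.card = 3)
    (hci : CondIntersecting 3 6 F) :
    F.card ≤ (n - 1).choose 2 := by
  have hPP := Stmt17Aux.goodFam_of_ci hci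
  have h := Stmt17Aux.key n n Finset.univ F
    (by rw [Finset.card_univ, Fintype.card_fin]) (fun S _ => Finset.subset_univ S) hunif hPP
  rw [Finset.card_univ, Fintype.card_fin] at h
  rwa [Stmt17Aux.BBnd, if_neg (by omega)] at h
end
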